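/- arXiv:2007.08934 — 5 statements merged into one kernel-verified Lean document; each statement's English description precedes it below -/
import Mathlib

section
/- Let E be a real inner product space, let U be a finite-dimensional subspace of E, let φ ∈ E with φ ≠ 0, and let x ∈ E. Let u be the orthogonal projection of x onto U and let w be the orthogonal projection of x onto the subspace U + span{φ} generated by U and φ. Then ‖x − w‖² ≤ ‖x − u‖² − ⟨x − u, φ⟩² / ‖φ‖². -/
open scoped RealInnerProductSpace

/-- Error reduction when one basis function `φ ≠ 0` is added to a
finite-dimensional subspace `U` of a real inner product space: with `u` the
orthogonal projection of `x` onto `U` and `w` the orthogonal projection of `x`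
onto `U + span{φ}` (each characterized by membership and orthogonality of the
residual), one has `‖x − w‖² ≤ ‖x − u‖² − ⟪x − u, φ⟫² / ‖φ‖²`. -/
theorem stmt_3 {E : Type*} [NormedAddCommGroup E] [InnerProductSpace ℝ E]
    (U : Submodule ℝ E) [FiniteDimensional ℝ U]
    (φ : E) (hφ : φ ≠ 0) (x u w : E)
    (huU : u ∈ U) (hu : ∀ y ∈ U, ⟪x - u, y⟫ = 0)
    (hwW : w ∈ U ⊔ (ℝ ∙ φ)) (hw : ∀ y ∈ U ⊔ (ℝ ∙ φ), ⟪x - w, y⟫ = 0) :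
    ‖x - w‖ ^ 2 ≤ ‖x - u‖ ^ 2 - ⟪x - u, φ⟫ ^ 2 / ‖φ‖ ^ 2 := by
  have hφn : ‖φ‖ ≠ 0 := norm_ne_zero_iff.mpr hφ
  set c : ℝ := ⟪x - u, φ⟫ with hc
  set α : ℝ := c / ‖φ‖ ^ 2 with hα
  set v : E := u + α • φ with hv
  have hvW : v ∈ U ⊔ (ℝ ∙ φ) := by
    apply Submodule.add_mem
    · exact Submodule.mem_sup_left huU
    · exact Submodule.mem_sup_right (Submodule.smul_mem _ _ (Submodule.mem_span_singleton_self φ))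
  -- ‖x - w‖² ≤ ‖x - v‖²
  have h1 : ‖x - v‖ ^ 2 = ‖x - w‖ ^ 2 + ‖w - v‖ ^ 2 := by
    have hxv : x - v = (x - w) + (w - v) := by abel
    have hperp : ⟪x - w, w - v⟫ = 0 :=
      hw _ (Submodule.sub_mem _ hwW hvW)
    rw [hxv, norm_add_sq_real, hperp]
    ring
  have h2 : ‖x - w‖ ^ 2 ≤ ‖x - v‖ ^ 2 := by
    rw [h1]; nlinarith [sq_nonneg ‖w - v‖]
  -- compute ‖x - v‖²
  have h3 : ‖x - v‖ ^ 2 = ‖x - u‖ ^ 2 - c ^ 2 / ‖φ‖ ^ 2 := by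
    have hxv : x - v = (x - u) - α • φ := by rw [hv]; abel
    rw [hxv, norm_sub_sq_real, real_inner_smul_right, norm_smul, ← hc]
    rw [mul_pow, hα]
    have : |α| ^ 2 = α ^ 2 := sq_abs α
    rw [Real.norm_eq_abs, sq_abs]
    field_simp
    ring
  linarith [h2, h3.symm.le]
end

section
/- Let E be a real inner product space, let U be a finite-dimensional subspace of E, let I be a finite index set and (φ_i)_{i ∈ I} a family of nonzero, pairwise orthogonal vectors of E (⟨φ_i, φ_j⟩ = 0 for i ≠ j), and let x ∈ E. Let u be the orthogonal projection of x onto U and let w be the orthogonal projection of x onto the subspace U + span{φ_i : i ∈ I}. Then ‖x − w‖² ≤ ‖x − u‖² − ∑_{i ∈ I} ⟨x − u, φ_i⟩² / ‖φ_i‖². -/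
open scoped RealInnerProductSpace

/-- Error reduction when a finite family of nonzero, pairwise orthogonal basis
functions `(φ i)_{i ∈ I}` is added to a finite-dimensional subspace `U` of a
real inner product space: with `u` the orthogonal projection of `x` onto `U`
and `w` the orthogonal projection of `x` onto `U + span{φ i : i ∈ I}` (each
characterized by membership and orthogonality of the residual), one has
`‖x − w‖² ≤ ‖x − u‖² − ∑_{i ∈ I} ⟪x − u, φ i⟫² / ‖φ i‖²`. -/
theorem stmt_4 {E : Type*} [NormedAddCommGroup E] [InnerProductSpace ℝ E]
    {ι : Type*} (I : Finset ι)
    (U : Submodule ℝ E) [FiniteDimensional ℝ U]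
    (φ : ι → E) (hφ : ∀ i ∈ I, φ i ≠ 0)
    (horth : ∀ i ∈ I, ∀ j ∈ I, i ≠ j → ⟪φ i, φ j⟫ = 0)
    (x u w : E)
    (huU : u ∈ U) (hu : ∀ y ∈ U, ⟪x - u, y⟫ = 0)
    (hwW : w ∈ U ⊔ Submodule.span ℝ (φ '' I))
    (hw : ∀ y ∈ U ⊔ Submodule.span ℝ (φ '' I), ⟪x - w, y⟫ = 0) :
    ‖x - w‖ ^ 2 ≤ ‖x - u‖ ^ 2 - ∑ i ∈ I, ⟪x - u, φ i⟫ ^ 2 / ‖φ i‖ ^ 2 := by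
  set W := U ⊔ Submodule.span ℝ (φ '' I) with hWdef
  set c : ι → ℝ := fun i => ⟪x - u, φ i⟫ / ‖φ i‖ ^ 2 with hc
  set s : E := ∑ i ∈ I, c i • φ i with hs
  set T : ℝ := ∑ i ∈ I, ⟪x - u, φ i⟫ ^ 2 / ‖φ i‖ ^ 2 with hT
  have hsW : s ∈ W := by
    apply Submodule.sum_mem
    intro i hi
    exact Submodule.smul_mem _ _
      (Submodule.mem_sup_right (Submodule.subset_span ⟨i, hi, rfl⟩))
  have hvW : u + s ∈ W := W.add_mem (Submodule.mem_sup_left huU) hsW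
  have hxs : ⟪x - u, s⟫ = T := by
    rw [hs, inner_sum, hT]
    refine Finset.sum_congr rfl fun i hi => ?_
    have h0 : ‖φ i‖ ≠ 0 := norm_ne_zero_iff.mpr (hφ i hi)
    rw [real_inner_smul_right, hc]
    field_simp
  have hss : ⟪s, s⟫ = T := by
    rw [hs, inner_sum, hT]
    refine Finset.sum_congr rfl fun i hi => ?_
    rw [sum_inner, Finset.sum_eq_single_of_mem i hi]
    · rw [real_inner_smul_left, real_inner_smul_right, real_inner_self_eq_norm_sq]
      have h0 : ‖φ i‖ ≠ 0 := norm_ne_zero_iff.mpr (hφ i hi)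
      rw [hc]
      field_simp
    · intro j hj hne
      rw [real_inner_smul_left, real_inner_smul_right, horth j hj i hi hne]
      ring
  have hxv : ‖x - (u + s)‖ ^ 2 = ‖x - u‖ ^ 2 - T := by
    have h1 : x - (u + s) = (x - u) - s := by abel
    have h2 : ‖s‖ ^ 2 = T := by rw [← real_inner_self_eq_norm_sq, hss]
    rw [h1, norm_sub_sq_real, hxs, h2]
    ring
  have key : ‖x - (u + s)‖ ^ 2 = ‖x - w‖ ^ 2 + ‖w - (u + s)‖ ^ 2 := by
    have h1 : x - (u + s) = (x - w) + (w - (u + s)) := by abel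
    have h2 : ⟪x - w, w - (u + s)⟫ = 0 := hw _ (W.sub_mem hwW hvW)
    rw [h1, norm_add_sq_real, h2]
    ring
  nlinarith [sq_nonneg ‖w - (u + s)‖]
end

section
/- Let N be a natural number, let I be a subset of Fin N, let s, s', b : Fin N → ℝ be nonnegative, let θ, δ ∈ (0,1) and α > 0 be real numbers. Assume θ · ∑_{i} (s i)² ≤ ∑_{i ∈ I} (s i)², that s' i ≤ √δ · s i + b i for every i ∈ I, and that s' i ≤ s i + b i for every i ∉ I. Then ∑_{i} (s' i)² ≤ (1 + α)·(1 − (1 − δ)·θ)·∑_{i} (s i)² + (1 + α⁻¹)·∑_{i} (b i)². -/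
lemma young_aux (α x y : ℝ) (hα : 0 < α) (hx : 0 ≤ x) (hy : 0 ≤ y) :
    (x + y) ^ 2 ≤ (1 + α) * x ^ 2 + (1 + α⁻¹) * y ^ 2 := by
  have h : 0 ≤ (α * x - y) ^ 2 / α := div_nonneg (sq_nonneg _) hα.le
  have hα' : α ≠ 0 := hα.ne'
  have : (α * x - y) ^ 2 / α = α * x ^ 2 - 2 * x * y + α⁻¹ * y ^ 2 := by
    field_simp; ring
  nlinarith [h, this]

/-- Combination step in the proof of Theorem 3.1: with Dörfler marking
`θ ∑ (s i)² ≤ ∑_{i ∈ I} (s i)²`, contraction `s' i ≤ √δ s i + b i` on marked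
elements and `s' i ≤ s i + b i` elsewhere, Young's inequality yields
`∑ (s' i)² ≤ (1+α)(1−(1−δ)θ) ∑ (s i)² + (1+α⁻¹) ∑ (b i)²`. -/
theorem stmt_9 (N : ℕ) (I : Finset (Fin N)) (s s' b : Fin N → ℝ)
    (hs : ∀ i, 0 ≤ s i) (hs' : ∀ i, 0 ≤ s' i) (hb : ∀ i, 0 ≤ b i)
    (θ δ α : ℝ) (hθ0 : 0 < θ) (hθ1 : θ < 1) (hδ0 : 0 < δ) (hδ1 : δ < 1)
    (hα : 0 < α)
    (hmark : θ * ∑ i, (s i) ^ 2 ≤ ∑ i ∈ I, (s i) ^ 2)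
    (hin : ∀ i ∈ I, s' i ≤ Real.sqrt δ * s i + b i)
    (hout : ∀ i ∉ I, s' i ≤ s i + b i) :
    ∑ i, (s' i) ^ 2
      ≤ (1 + α) * (1 - (1 - δ) * θ) * ∑ i, (s i) ^ 2
        + (1 + α⁻¹) * ∑ i, (b i) ^ 2 := by
  set c : Fin N → ℝ := fun i => if i ∈ I then δ else 1 with hc
  have key : ∀ i, (s' i) ^ 2 ≤ (1 + α) * (c i * (s i) ^ 2) + (1 + α⁻¹) * (b i) ^ 2 := by
    intro i
    by_cases h : i ∈ I
    · have h1 : s' i ≤ Real.sqrt δ * s i + b i := hin i h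
      have h2 : (s' i) ^ 2 ≤ (Real.sqrt δ * s i + b i) ^ 2 := by
        apply pow_le_pow_left₀ (hs' i) h1
      have h3 := young_aux α (Real.sqrt δ * s i) (b i) hα
        (mul_nonneg (Real.sqrt_nonneg δ) (hs i)) (hb i)
      have h4 : (Real.sqrt δ * s i) ^ 2 = δ * (s i) ^ 2 := by
        rw [mul_pow, Real.sq_sqrt hδ0.le]
      simp only [hc, if_pos h]
      nlinarith
    · have h1 : s' i ≤ s i + b i := hout i h
      have h2 : (s' i) ^ 2 ≤ (s i + b i) ^ 2 := pow_le_pow_left₀ (hs' i) h1 2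
      have h3 := young_aux α (s i) (b i) hα (hs i) (hb i)
      simp only [hc, if_neg h]
      nlinarith
  have sum1 : ∑ i, (s' i) ^ 2
      ≤ (1 + α) * ∑ i, c i * (s i) ^ 2 + (1 + α⁻¹) * ∑ i, (b i) ^ 2 := by
    rw [Finset.mul_sum, Finset.mul_sum, ← Finset.sum_add_distrib]
    exact Finset.sum_le_sum fun i _ => key i
  have sum2 : ∑ i, c i * (s i) ^ 2
      = ∑ i, (s i) ^ 2 - (1 - δ) * ∑ i ∈ I, (s i) ^ 2 := by
    have h1 : ∀ i, c i * (s i) ^ 2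
        = (s i) ^ 2 - (if i ∈ I then (1 - δ) * (s i) ^ 2 else 0) := by
      intro i; by_cases h : i ∈ I <;> simp [hc, h] <;> ring
    simp only [h1]
    rw [Finset.sum_sub_distrib, Finset.sum_ite_mem, Finset.univ_inter,
      Finset.mul_sum]
  have sum3 : ∑ i, c i * (s i) ^ 2 ≤ (1 - (1 - δ) * θ) * ∑ i, (s i) ^ 2 := by
    rw [sum2]
    have : (1 - δ) * (θ * ∑ i, (s i) ^ 2) ≤ (1 - δ) * ∑ i ∈ I, (s i) ^ 2 :=
      mul_le_mul_of_nonneg_left hmark (by linarith)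
    nlinarith
  have hpos : (0:ℝ) ≤ 1 + α := by linarith
  nlinarith [mul_le_mul_of_nonneg_left sum3 hpos]
end

section
/- Let C ≥ 1, θ ∈ (0,1), ρ ∈ (0,1) and ε be real numbers with 0 < ε < 1 − ρ. Let L : ℕ → ℝ be a nonincreasing sequence with L m ≥ 0 for all m and L 1 ≥ 1, and let τ be a real number with 0 < τ ≤ (1 − ρ − ε)/(ρ · L 1). Let e, σ, d : ℕ → ℝ be nonnegative sequences such that for every m ≥ 1: (i) (e m)² = d m + (e (m+1))²; (ii) σ (m+1) ≤ ρ · σ m + L (m+1) · d m; and (iii) (e m)² ≤ (C/θ) · σ m. Set ε_off = 1 − ε·θ·τ/(2·C·(1 + τ·L 1)). Then 0 < ε_off < 1 and for every m ≥ 1, (e (m+1))² + (τ/(1 + τ·L (m+1)))·σ (m+1) ≤ ε_off · ((e m)² + (τ/(1 + τ·L m))·σ m). -/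
set_option maxHeartbeats 1000000 in
/-- Theorem 3.1 of the paper (convergence of the offline adaptive enrichment
algorithm) in sequence form: under Galerkin orthogonality (i), residual
contraction (ii) and the a-posteriori reliability bound (iii), the quantity
`(e m)² + (τ/(1 + τ L m)) σ m` contracts with rate
`ε_off = 1 − εθτ/(2C(1 + τ L 1)) ∈ (0,1)`. -/
theorem stmt_10 (C θ ρ ε : ℝ)
    (hC : 1 ≤ C) (hθ0 : 0 < θ) (hθ1 : θ < 1) (hρ0 : 0 < ρ) (hρ1 : ρ < 1)
    (hε0 : 0 < ε) (hε1 : ε < 1 - ρ)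
    (L : ℕ → ℝ) (hLmono : ∀ m n, m ≤ n → L n ≤ L m) (hL0 : ∀ m, 0 ≤ L m)
    (hL1 : 1 ≤ L 1)
    (τ : ℝ) (hτ0 : 0 < τ) (hτ : τ ≤ (1 - ρ - ε) / (ρ * L 1))
    (e σ d : ℕ → ℝ)
    (he : ∀ m, 0 ≤ e m) (hσ : ∀ m, 0 ≤ σ m) (hd : ∀ m, 0 ≤ d m)
    (horth : ∀ m, 1 ≤ m → (e m) ^ 2 = d m + (e (m + 1)) ^ 2)
    (hcontr : ∀ m, 1 ≤ m → σ (m + 1) ≤ ρ * σ m + L (m + 1) * d m)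
    (hrel : ∀ m, 1 ≤ m → (e m) ^ 2 ≤ (C / θ) * σ m) :
    (0 < 1 - ε * θ * τ / (2 * C * (1 + τ * L 1)) ∧
        1 - ε * θ * τ / (2 * C * (1 + τ * L 1)) < 1) ∧
      ∀ m, 1 ≤ m →
        (e (m + 1)) ^ 2 + (τ / (1 + τ * L (m + 1))) * σ (m + 1)
          ≤ (1 - ε * θ * τ / (2 * C * (1 + τ * L 1))) *
              ((e m) ^ 2 + (τ / (1 + τ * L m)) * σ m) := by
  have hC0 : (0:ℝ) < C := lt_of_lt_of_le one_pos hC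
  have hL1pos : (0:ℝ) < L 1 := lt_of_lt_of_le one_pos hL1
  have hD1 : (0:ℝ) < 1 + τ * L 1 := by positivity
  set δ := ε * θ * τ / (2 * C * (1 + τ * L 1)) with hδdef
  clear_value δ
  have hδpos : 0 < δ := by rw [hδdef]; positivity
  have hδhalf : δ ≤ ε / 2 := by
    rw [hδdef, div_le_div_iff₀ (by positivity) (by norm_num)]
    nlinarith [mul_nonneg (sub_nonneg.mpr hC) hD1.le,
      mul_nonneg hτ0.le (sub_nonneg.mpr (hθ1.le.trans hL1)),
      mul_nonneg hε0.le (mul_nonneg (sub_nonneg.mpr hC) hD1.le),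
      mul_nonneg hε0.le (mul_nonneg hτ0.le (sub_nonneg.mpr (hθ1.le.trans hL1)))]
  have hδ1 : δ < 1 := by linarith
  refine ⟨⟨by linarith, by linarith⟩, ?_⟩
  intro m hm
  have hm1 : (1:ℕ) ≤ m + 1 := by omega
  have hLm1 : L (m + 1) ≤ L 1 := hLmono 1 (m + 1) hm1
  have hLm : L m ≤ L 1 := hLmono 1 m hm
  have hA : (0:ℝ) < 1 + τ * L m := by
    have := mul_nonneg hτ0.le (hL0 m); linarith
  have hB : (0:ℝ) < 1 + τ * L (m + 1) := by
    have := mul_nonneg hτ0.le (hL0 (m + 1)); linarith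
  set a := τ / (1 + τ * L m) with hadef
  set b := τ / (1 + τ * L (m + 1)) with hbdef
  set g := τ / (1 + τ * L 1) with hgdef
  set γ := 1 / (1 + τ * L 1) with hγdef
  clear_value a b g γ
  have ha0 : 0 ≤ a := by rw [hadef]; positivity
  have hb0 : 0 ≤ b := by rw [hbdef]; positivity
  have hg0 : 0 ≤ g := by rw [hgdef]; positivity
  have hγ0 : 0 ≤ γ := by rw [hγdef]; positivity
  have hga : g ≤ a := by
    rw [hgdef, hadef, div_le_div_iff₀ hD1 hA]
    nlinarith [mul_le_mul_of_nonneg_left hLm (mul_nonneg hτ0.le hτ0.le)]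
  -- b * L (m+1) ≤ 1 - γ
  have h1 : b * L (m + 1) = 1 - 1 / (1 + τ * L (m + 1)) := by
    rw [hbdef]; field_simp; ring
  have h2 : γ ≤ 1 / (1 + τ * L (m + 1)) := by
    rw [hγdef]
    apply one_div_le_one_div_of_le hB
    nlinarith [mul_le_mul_of_nonneg_left hLm1 hτ0.le]
  have hbL : b * L (m + 1) ≤ 1 - γ := by rw [h1]; linarith
  -- ρ * b ≤ (1 - ε) * a
  have hτ' : τ * (ρ * L 1) ≤ 1 - ρ - ε := (le_div_iff₀ (by positivity)).mp hτ
  have hbτ : b ≤ τ := by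
    rw [hbdef]
    apply div_le_self hτ0.le
    nlinarith [mul_nonneg hτ0.le (hL0 (m + 1))]
  have hρτg : ρ * τ ≤ (1 - ε) * g := by
    have hrg : (1 - ε) * g = ((1 - ε) * τ) / (1 + τ * L 1) := by
      rw [hgdef]; ring
    rw [hrg, le_div_iff₀ hD1]
    linarith [mul_le_mul_of_nonneg_left hτ' hτ0.le]
  have hρb : ρ * b ≤ (1 - ε) * a := by
    have h3 : ρ * b ≤ ρ * τ := mul_le_mul_of_nonneg_left hbτ hρ0.le
    have h4 : (1 - ε) * g ≤ (1 - ε) * a :=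
      mul_le_mul_of_nonneg_left hga (by linarith)
    linarith
  -- key pieces
  have hd' : e (m + 1) ^ 2 = e m ^ 2 - d m := by linarith [horth m hm]
  have hσ1 : b * σ (m + 1) ≤ b * (ρ * σ m + L (m + 1) * d m) :=
    mul_le_mul_of_nonneg_left (hcontr m hm) hb0
  have f1 : ρ * b * σ m ≤ (1 - ε) * a * σ m :=
    mul_le_mul_of_nonneg_right hρb (hσ m)
  have f2 : b * L (m + 1) * d m ≤ (1 - γ) * d m :=
    mul_le_mul_of_nonneg_right hbL (hd m)
  have f3 : 0 ≤ γ * d m := mul_nonneg hγ0 (hd m)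
  have h5 : δ * e m ^ 2 ≤ δ * ((C / θ) * σ m) :=
    mul_le_mul_of_nonneg_left (hrel m hm) hδpos.le
  have h6 : δ * (C / θ) = (ε / 2) * g := by
    rw [hδdef, hgdef, div_mul_div_comm, mul_div_assoc',
      div_eq_div_iff (by positivity) (by positivity)]
    ring
  have h6' : δ * ((C / θ) * σ m) = (ε / 2) * g * σ m := by
    rw [← mul_assoc, h6]
  have h7 : (ε / 2) * g * σ m ≤ (ε - δ) * a * σ m := by
    have s1 : (ε / 2) * g * σ m ≤ (ε / 2) * a * σ m :=
      mul_le_mul_of_nonneg_right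
        (mul_le_mul_of_nonneg_left hga (by linarith)) (hσ m)
    have s2 : (ε / 2) * a * σ m ≤ (ε - δ) * a * σ m :=
      mul_le_mul_of_nonneg_right
        (mul_le_mul_of_nonneg_right (show ε / 2 ≤ ε - δ by linarith) ha0) (hσ m)
    linarith
  have h5' : δ * e m ^ 2 ≤ (ε - δ) * a * σ m := by
    calc δ * e m ^ 2 ≤ δ * ((C / θ) * σ m) := h5
      _ = (ε / 2) * g * σ m := h6'
      _ ≤ (ε - δ) * a * σ m := h7
  linarith only [hσ1, f1, f2, f3, h5', hd']
end

section
/- Let N be a positive natural number, let I be a nonempty subset of Fin N, let R : Fin N → ℝ with R i ≥ 0 for all i, let λ : Fin N → ℝ with λ i > 0 for all i, let C > 0, and let e, e' ≥ 0 be real numbers. Assume (i) e'² ≤ e² − ∑_{i ∈ I} (R i)², (ii) e² ≤ C · ∑_{i} (R i)²/(λ i), and (iii) ∑_{i} (R i)²/(λ i) > 0. Let Λ_min = min_{i ∈ I} λ i. Then e'² ≤ (1 − (Λ_min/C) · (∑_{i ∈ I} (R i)²/(λ i)) / (∑_{i} (R i)²/(λ i))) · e². -/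
/-- Theorem 4.1 of the paper (convergence of the online adaptive enrichment
algorithm) in abstract form: if the squared error drops by `∑_{i ∈ I} (R i)²`
and satisfies the a-posteriori bound `e² ≤ C ∑ i, (R i)²/(λ i)`, then with
`Λ_min = min_{i ∈ I} λ i`,
`e'² ≤ (1 − (Λ_min/C) (∑_{i ∈ I} (R i)²/(λ i))/(∑ i, (R i)²/(λ i))) e²`. -/
theorem stmt_11 (N : ℕ) (hN : 0 < N) (I : Finset (Fin N)) (hI : I.Nonempty)
    (R : Fin N → ℝ) (hR : ∀ i, 0 ≤ R i)
    (lam : Fin N → ℝ) (hlam : ∀ i, 0 < lam i)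
    (C : ℝ) (hC : 0 < C)
    (e e' : ℝ) (he : 0 ≤ e) (he' : 0 ≤ e')
    (h1 : e' ^ 2 ≤ e ^ 2 - ∑ i ∈ I, (R i) ^ 2)
    (h2 : e ^ 2 ≤ C * ∑ i, (R i) ^ 2 / lam i)
    (h3 : 0 < ∑ i, (R i) ^ 2 / lam i) :
    e' ^ 2
      ≤ (1 - (I.inf' hI lam / C) *
            (∑ i ∈ I, (R i) ^ 2 / lam i) / (∑ i, (R i) ^ 2 / lam i)) * e ^ 2 := by
  set Λ := I.inf' hI lam with hΛdef
  set S := ∑ i, (R i) ^ 2 / lam i with hS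
  set SI := ∑ i ∈ I, (R i) ^ 2 / lam i with hSI
  obtain ⟨j, hj, hjeq⟩ := Finset.exists_mem_eq_inf' hI lam
  have hΛpos : 0 < Λ := by rw [hΛdef, hjeq]; exact hlam j
  have hSInn : 0 ≤ SI := Finset.sum_nonneg fun i _ =>
    div_nonneg (sq_nonneg _) (hlam i).le
  -- Step A : Λ * SI ≤ ∑ i ∈ I, R i ^ 2
  have hA : Λ * SI ≤ ∑ i ∈ I, (R i) ^ 2 := by
    rw [hSI, Finset.mul_sum]
    refine Finset.sum_le_sum fun i hi => ?_
    have hle : Λ ≤ lam i := Finset.inf'_le _ hi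
    calc Λ * ((R i) ^ 2 / lam i) ≤ lam i * ((R i) ^ 2 / lam i) := by
          exact mul_le_mul_of_nonneg_right hle (div_nonneg (sq_nonneg _) (hlam i).le)
      _ = (R i) ^ 2 := by rw [mul_comm, div_mul_cancel₀ _ (hlam i).ne']
  -- Step B : (Λ/C) * SI / S * e² ≤ Λ * SI
  have hcoef : 0 ≤ Λ / C * SI / S :=
    div_nonneg (mul_nonneg (div_nonneg hΛpos.le hC.le) hSInn) h3.le
  have hB : Λ / C * SI / S * e ^ 2 ≤ Λ * SI := by
    calc Λ / C * SI / S * e ^ 2 ≤ Λ / C * SI / S * (C * S) :=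
          mul_le_mul_of_nonneg_left h2 hcoef
      _ = Λ * SI := by field_simp
  have : e' ^ 2 ≤ e ^ 2 - Λ * SI := by
    refine h1.trans ?_
    linarith
  calc e' ^ 2 ≤ e ^ 2 - Λ * SI := this
    _ ≤ e ^ 2 - Λ / C * SI / S * e ^ 2 := by linarith
    _ = (1 - Λ / C * SI / S) * e ^ 2 := by ring
end
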